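/- (Projection Slice Theorem.) Let f be a Schwartz function on ℝ² and s ∈ ℝ. Define the Radon transform Rf(u,s) = ∫_ℝ f(u − s x₂, x₂) dx₂. Then for every ω ∈ ℝ, the one-dimensional Fourier transform of u ↦ Rf(u,s) evaluated at ω equals f̂(ω, sω), i.e. ∫_ℝ Rf(u,s) e^{−2πi uω} du = f̂(ω·(1,s)). -/

import Mathlib

open MeasureTheory Real Set

/-- The Fourier transform on `ℝ²` with convention `f̂(ω) = ∫ f(x) e^{−2πi x·ω} dx`. -/
noncomputable def FT2 (f : ℝ × ℝ → ℂ) (ω : ℝ × ℝ) : ℂ :=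
  ∫ x : ℝ × ℝ, f x * Complex.exp (-(2 * Real.pi * (x.1 * ω.1 + x.2 * ω.2)) * Complex.I)

/-- The Radon transform (parametrized by slope): `Rf(u,s) = ∫ f(u − s x₂, x₂) dx₂`. -/
noncomputable def RadonT (f : ℝ × ℝ → ℂ) (u s : ℝ) : ℂ :=
  ∫ x2 : ℝ, f (u - s * x2, x2)

/-- **Projection Slice Theorem.** For a Schwartz function `f` on `ℝ²`
and `s ∈ ℝ`, the one-dimensional Fourier transform of `u ↦ Rf(u,s)` at `ω` equals
`f̂(ω, sω)`, i.e. `∫ Rf(u,s) e^{−2πiuω} du = f̂(ω·(1,s))`. -/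
theorem stmt5 (f : SchwartzMap (ℝ × ℝ) ℂ) (s : ℝ) (ω : ℝ) :
    (∫ u : ℝ, RadonT (fun x => f x) u s * Complex.exp (-(2 * Real.pi * (u * ω)) * Complex.I))
      = FT2 (fun x => f x) (ω * 1, ω * s) := by
  set g : ℝ × ℝ → ℂ := fun x =>
    f x * Complex.exp (-(2 * Real.pi * (x.1 * (ω * 1) + x.2 * (ω * s))) * Complex.I) with hgdef
  set T : ℝ × ℝ → ℝ × ℝ := fun p => (p.1 - s * p.2, p.2) with hTdef
  -- T is measure preserving
  have hT : MeasurePreserving T volume volume := by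
    have h1 : MeasurePreserving (fun p : ℝ × ℝ => (p.1, p.2 - s * p.1))
        ((volume : Measure ℝ).prod volume) ((volume : Measure ℝ).prod volume) :=
      MeasurePreserving.skew_product (MeasurePreserving.id _)
        (by fun_prop) (ae_of_all _ fun a => (measurePreserving_sub_right volume (s * a)).map_eq)
    have h2 : MeasurePreserving (Prod.swap : ℝ × ℝ → ℝ × ℝ)
        ((volume : Measure ℝ).prod volume) ((volume : Measure ℝ).prod volume) :=
      Measure.measurePreserving_swap
    have h3 := (h2.comp h1).comp h2
    rw [Measure.volume_eq_prod]
    convert h3 using 1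
    all_goals rfl
  -- g is integrable
  have hg : Integrable g volume := by
    refine (f.integrable (μ := volume)).bdd_mul (c := 1)
      ((Complex.continuous_exp.comp (by continuity)).aestronglyMeasurable)
      (ae_of_all _ fun x => ?_) |>.congr (ae_of_all _ fun x => mul_comm _ _)
    simp [Function.comp, Complex.norm_exp]
  have hgT : Integrable (g ∘ T) volume :=
    memLp_one_iff_integrable.mp
      ((memLp_one_iff_integrable.mpr hg).comp_measurePreserving hT)
  -- pointwise: the integrand of the LHS is g ∘ T
  have hpt : ∀ u x2 : ℝ,
      (f (u - s * x2, x2) : ℂ) * Complex.exp (-(2 * Real.pi * (u * ω)) * Complex.I)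
        = g (T (u, x2)) := by
    intro u x2
    simp only [hgdef, hTdef]
    congr 2
    push_cast
    ring
  calc
    (∫ u : ℝ, RadonT (fun x => f x) u s * Complex.exp (-(2 * Real.pi * (u * ω)) * Complex.I))
        = ∫ u : ℝ, ∫ x2 : ℝ, g (T (u, x2)) := by
          refine integral_congr_ae (ae_of_all _ fun u => ?_)
          simp only [RadonT]
          rw [← integral_mul_const]
          exact integral_congr_ae (ae_of_all _ fun x2 => hpt u x2)
    _ = ∫ p : ℝ × ℝ, g (T p) := by
          rw [Measure.volume_eq_prod] at hgT ⊢
          exact (integral_integral (f := fun u x2 => g (T (u, x2))) hgT).trans rfl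
    _ = ∫ p : ℝ × ℝ, g p := by
          have h := integral_map (μ := volume) hT.measurable.aemeasurable (f := g)
            (by rw [hT.map_eq]; exact hg.aestronglyMeasurable)
          rw [hT.map_eq] at h
          exact h.symm
    _ = FT2 (fun x => f x) (ω * 1, ω * s) := by rw [hgdef, FT2]; push_cast; rfl
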